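/- Let A : X → ℝ be θ-Hölder for some θ ∈ (0,1] and assume Ω(A) is the disjoint union of finitely many irreducible components C_1, …, C_r. For every continuous sub-action u for A and all indices i, j, the function (x, y) ↦ h_A(x, y) − u(y) + u(x) is constant on C_i × C_j; that is, for all (x, y), (x̄, ȳ) ∈ C_i × C_j one has h_A(x, y) − u(y) + u(x) = h_A(x̄, ȳ) − u(ȳ) + u(x̄). -/

import Mathlib

open MeasureTheory Filter Topology

section GLT

variable {X : Type*} [MetricSpace X]

/-- A transitive expanding dynamical system: a continuous, surjective, open,
several-to-one map whose inverse branches are uniformly contracting, and which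
is topologically transitive. -/
structure IsExpandingTransitive (T : X → X) : Prop where
  cont : Continuous T
  surj : Function.Surjective T
  isOpenMap : IsOpenMap T
  finite_preimages : ∀ x : X, {y : X | T y = x}.Finite
  transitive : ∀ U V : Set X, IsOpen U → IsOpen V → U.Nonempty → V.Nonempty →
    ∃ n : ℕ, ((T^[n]) ⁻¹' U ∩ V).Nonempty
  contracting : ∃ lam : ℝ, 0 < lam ∧ lam < 1 ∧ ∃ δ : ℝ, 0 < δ ∧
    ∀ x y : X, dist x y ≤ δ → dist x y ≤ lam * dist (T x) (T y)

/-- `Abar` is the ergodic minimizing value of `A`: the minimum (attained) of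
`∫ A dμ` over all `T`-invariant Borel probability measures `μ`. -/
def IsErgMinValue [MeasurableSpace X] (T : X → X) (A : X → ℝ) (Abar : ℝ) : Prop :=
  (∃ μ : Measure X, IsProbabilityMeasure μ ∧ MeasurePreserving T μ μ ∧ (∫ x, A x ∂μ) = Abar) ∧
  ∀ μ : Measure X, IsProbabilityMeasure μ → MeasurePreserving T μ μ → Abar ≤ ∫ x, A x ∂μ

/-- `f` is θ-Hölder. -/
def IsThetaHolder (θ : ℝ) (f : X → ℝ) : Prop :=
  ∃ C : ℝ, 0 ≤ C ∧ ∀ x y : X, |f x - f y| ≤ C * dist x y ^ θ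

/-- `u` is a (continuous) sub-action for `A` with ergodic minimizing value `Abar`. -/
def IsSubaction (T : X → X) (A : X → ℝ) (Abar : ℝ) (u : X → ℝ) : Prop :=
  Continuous u ∧ ∀ x : X, u (T x) - u x + Abar ≤ A x

/-- The contact locus of a sub-action `u`. -/
def contactLocus (T : X → X) (A : X → ℝ) (Abar : ℝ) (u : X → ℝ) : Set X :=
  {x : X | A x = u (T x) - u x + Abar}

/-- The set `Ω(A)` of non-wandering points with respect to `A`. -/
def nonwanderingSet (T : X → X) (A : X → ℝ) (Abar : ℝ) : Set X :=
  {x : X | ∀ ε : ℝ, 0 < ε → ∃ k : ℕ, 1 ≤ k ∧ ∃ y : X,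
    dist x y < ε ∧ dist x (T^[k] y) < ε ∧
    |∑ j ∈ Finset.range k, (A (T^[j] y) - Abar)| < ε}

/-- `u` is a calibrated sub-action: `u x = min_{T y = x} [u y + A y - Abar]`,
the minimum being attained. -/
def IsCalibrated (T : X → X) (A : X → ℝ) (Abar : ℝ) (u : X → ℝ) : Prop :=
  Continuous u ∧ ∀ x : X,
    (∀ y : X, T y = x → u x ≤ u y + A y - Abar) ∧
    (∃ y : X, T y = x ∧ u x = u y + A y - Abar)

/-- `S_A^ε(x, x', k)`: infimum of Birkhoff sums of `A - Abar` over orbit segments of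
length `k` starting within `ε` of `x` and ending within `ε` of `x'`
(`sInf ∅ = ⊤` in `EReal`). -/
noncomputable def birkhoffInf (T : X → X) (A : X → ℝ) (Abar : ℝ) (ε : ℝ) (x x' : X)
    (k : ℕ) : EReal :=
  sInf {v : EReal | ∃ z : X, dist z x < ε ∧ dist (T^[k] z) x' < ε ∧
    v = ((∑ j ∈ Finset.range k, (A (T^[j] z) - Abar) : ℝ) : EReal)}

/-- The Mañé potential `φ_A(x, x') = lim_{ε→0} inf_{k ≥ 1} S_A^ε(x, x', k)`;
since the quantity is nonincreasing in `ε`, the limit as `ε → 0` is the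
supremum over `ε > 0`. -/
noncomputable def manePotential (T : X → X) (A : X → ℝ) (Abar : ℝ) (x x' : X) : EReal :=
  ⨆ ε : {e : ℝ // 0 < e}, ⨅ k : {n : ℕ // 1 ≤ n}, birkhoffInf T A Abar ε.1 x x' k.1

/-- The Peierls barrier `h_A(x, x') = lim_{ε→0} liminf_{k→∞} S_A^ε(x, x', k)`;
since the quantity is nonincreasing in `ε`, the limit as `ε → 0` is the
supremum over `ε > 0`. -/
noncomputable def peierlsBarrier (T : X → X) (A : X → ℝ) (Abar : ℝ) (x x' : X) : EReal :=
  ⨆ ε : {e : ℝ // 0 < e},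
    Filter.liminf (fun k : ℕ => birkhoffInf T A Abar ε.1 x x' k) Filter.atTop

/-- `C` is an irreducible component of `Ω(A)`: an equivalence class of the
relation `x ∼ x' ↔ h_A(x, x') + h_A(x', x) = 0` on `Ω(A)`. -/
def IsIrredComponent (T : X → X) (A : X → ℝ) (Abar : ℝ) (C : Set X) : Prop :=
  ∃ x ∈ nonwanderingSet T A Abar, C = {y ∈ nonwanderingSet T A Abar |
    peierlsBarrier T A Abar x y + peierlsBarrier T A Abar y x = 0}

/-- The θ-Hölder norm `‖f‖_θ = sup |f| + sup_{x ≠ y} |f x - f y| / d(x,y)^θ`. -/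
noncomputable def holderNorm (θ : ℝ) (f : X → ℝ) : ℝ :=
  (⨆ x : X, |f x|) +
    ⨆ p : {p : X × X // p.1 ≠ p.2}, |f p.1.1 - f p.1.2| / dist p.1.1 p.1.2 ^ θ

end GLT


-- EReal helper: c ≤ a if c ≤ a + γ for all γ > 0
lemma ereal_le_coe_of_forall (c : EReal) (a : ℝ)
    (h : ∀ γ : ℝ, 0 < γ → c ≤ ((a + γ : ℝ) : EReal)) : c ≤ (a : EReal) := by
  by_contra hlt
  push_neg at hlt
  have hne : c ≠ ⊤ := by
    intro hc; rw [hc] at h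
    exact EReal.coe_ne_top _ (top_le_iff.mp (h 1 one_pos))
  have hnb : c ≠ ⊥ := by
    intro hc; rw [hc] at hlt; exact absurd hlt (by simp)
  lift c to ℝ using ⟨hne, hnb⟩ with r
  rw [EReal.coe_lt_coe_iff] at hlt
  have := h ((r - a) / 2) (by linarith)
  rw [EReal.coe_le_coe_iff] at this
  linarith

lemma coe_le_ereal_of_forall (c : EReal) (a : ℝ)
    (h : ∀ γ : ℝ, 0 < γ → ((a - γ : ℝ) : EReal) ≤ c) : (a : EReal) ≤ c := by
  by_contra hlt
  push_neg at hlt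
  have hne : c ≠ ⊤ := hlt.ne_top
  have hnb : c ≠ ⊥ := by
    intro hc; rw [hc] at h
    exact EReal.coe_ne_bot _ (le_bot_iff.mp (h 1 one_pos))
  lift c to ℝ using ⟨hne, hnb⟩ with r
  rw [EReal.coe_lt_coe_iff] at hlt
  have := h ((a - r) / 2) (by linarith)
  rw [EReal.coe_le_coe_iff] at this
  linarith

-- telescoping lower bound
lemma birkhoff_ge_sub {X : Type*} (T : X → X) (A : X → ℝ) (Abar : ℝ) (u : X → ℝ)
    (hu : ∀ x, u (T x) - u x + Abar ≤ A x) (z : X) (k : ℕ) :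
    u (T^[k] z) - u z ≤ ∑ j ∈ Finset.range k, (A (T^[j] z) - Abar) := by
  have : u (T^[k] z) - u z = ∑ j ∈ Finset.range k, (u (T^[j+1] z) - u (T^[j] z)) := by
    rw [Finset.sum_range_sub (fun j => u (T^[j] z))]
    simp
  rw [this]
  apply Finset.sum_le_sum
  intro j _
  have := hu (T^[j] z)
  rw [← Function.iterate_succ_apply' T j z] at this
  linarith

section Helpers
variable {X : Type*} [MetricSpace X]

lemma peierls_lower [CompactSpace X]
    (T : X → X) (A : X → ℝ) (Abar : ℝ) (u : X → ℝ)
    (hu : IsSubaction T A Abar u) (x y : X) :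
    ((u y - u x : ℝ) : EReal) ≤ peierlsBarrier T A Abar x y := by
  obtain ⟨hcont, hsub⟩ := hu
  apply coe_le_ereal_of_forall
  intro γ hγ
  have huc : UniformContinuous u := CompactSpace.uniformContinuous_of_continuous hcont
  rw [Metric.uniformContinuous_iff] at huc
  obtain ⟨ε, hε, hmod⟩ := huc (γ/2) (by linarith)
  have key : ((u y - u x - γ : ℝ) : EReal)
      ≤ liminf (fun k => birkhoffInf T A Abar ε x y k) atTop := by
    refine le_liminf_of_le (by isBoundedDefault) ?_
    apply Filter.Eventually.of_forall
    intro k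
    apply le_sInf
    rintro v ⟨z, hz1, hz2, rfl⟩
    rw [EReal.coe_le_coe_iff]
    have h1 := birkhoff_ge_sub T A Abar u hsub z k
    have h2 := hmod hz1
    have h3 := hmod hz2
    rw [Real.dist_eq, abs_lt] at h2 h3
    linarith
  exact key.trans (le_iSup (fun e : {e : ℝ // 0 < e} =>
    liminf (fun k => birkhoffInf T A Abar e.1 x y k) atTop) ⟨ε, hε⟩)

lemma exists_rho [CompactSpace X] {T : X → X} (hcont : Continuous T)
    (hopen : IsOpenMap T) {δ : ℝ} (hδ : 0 < δ) :
    ∃ ρ : ℝ, 0 < ρ ∧ ∀ x q : X, dist q (T x) < ρ → ∃ w, T w = q ∧ dist w x < δ := by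
  by_contra hcon
  push_neg at hcon
  have H : ∀ n : ℕ, ∃ x q : X, dist q (T x) < 1 / (n + 1) ∧
      ∀ w, T w = q → ¬ dist w x < δ := by
    intro n
    obtain ⟨x, q, h1, h2⟩ := hcon (1 / (n + 1)) (by positivity)
    exact ⟨x, q, h1, fun w hw hd => absurd hd (not_lt.mpr (h2 w hw))⟩
  choose xs qs h1 h2 using H
  obtain ⟨a, -, φ, hφ, hconv⟩ := isCompact_univ.tendsto_subseq (fun n => Set.mem_univ (xs n))
  have hTconv : Tendsto (fun n => T (xs (φ n))) atTop (𝓝 (T a)) :=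
    (hcont.continuousAt.tendsto).comp hconv
  have hd0 : Tendsto (fun n => dist (qs (φ n)) (T (xs (φ n)))) atTop (𝓝 0) := by
    apply squeeze_zero (fun n => dist_nonneg) (fun n => (h1 (φ n)).le.trans ?_)
      tendsto_one_div_add_atTop_nhds_zero_nat
    have : (n : ℝ) + 1 ≤ (φ n : ℝ) + 1 := by
      have h : n ≤ φ n := hφ.le_apply
      have : (n:ℝ) ≤ (φ n : ℝ) := Nat.cast_le.mpr h
      linarith
    exact one_div_le_one_div_of_le (by positivity) this
  have hqconv : Tendsto (fun n => qs (φ n)) atTop (𝓝 (T a)) := by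
    apply hTconv.congr_dist
    simpa [dist_comm] using hd0
  have hmem : T '' (Metric.ball a (δ/2)) ∈ 𝓝 (T a) :=
    (hopen _ Metric.isOpen_ball).mem_nhds ⟨a, Metric.mem_ball_self (by linarith), rfl⟩
  have hev1 : ∀ᶠ n in atTop, qs (φ n) ∈ T '' (Metric.ball a (δ/2)) := hqconv.eventually_mem hmem
  have hev2 : ∀ᶠ n in atTop, dist (xs (φ n)) a < δ/2 :=
    hconv (Metric.ball_mem_nhds a (by linarith))
  obtain ⟨n, hn1, hn2⟩ := (hev1.and hev2).exists
  obtain ⟨w, hw1, hw2⟩ := hn1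
  refine h2 (φ n) w hw2 ?_
  calc dist w (xs (φ n)) ≤ dist w a + dist a (xs (φ n)) := dist_triangle _ _ _
    _ < δ/2 + δ/2 := by rw [dist_comm a]; exact add_lt_add hw1 hn2
    _ = δ := by ring

lemma shadow {T : X → X} {lam ρ : ℝ} (hlam0 : 0 ≤ lam) (hlam1 : lam ≤ 1)
    (hpull : ∀ x q : X, dist q (T x) < ρ → ∃ w, T w = q ∧ dist w x ≤ lam * dist q (T x)) :
    ∀ (k : ℕ) (p q : X), dist q (T^[k] p) < ρ →
      ∃ w, T^[k] w = q ∧ ∀ j ≤ k, dist (T^[j] w) (T^[j] p) ≤ lam ^ (k - j) * dist q (T^[k] p) := by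
  intro k
  induction k with
  | zero =>
    intro p q h
    exact ⟨q, rfl, fun j hj => by
      interval_cases j; simp⟩
  | succ k ih =>
    intro p q h
    rw [Function.iterate_succ_apply] at h
    obtain ⟨w', hw'1, hw'2⟩ := ih (T p) q h
    have hD : (0:ℝ) ≤ dist q (T^[k] (T p)) := dist_nonneg
    have h0 : dist w' (T p) ≤ lam ^ k * dist q (T^[k] (T p)) := by
      simpa using hw'2 0 (Nat.zero_le k)
    have hlamk : lam ^ k ≤ 1 := pow_le_one₀ hlam0 hlam1
    have h0' : dist w' (T p) < ρ := by
      calc dist w' (T p) ≤ lam ^ k * dist q (T^[k] (T p)) := h0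
        _ ≤ 1 * dist q (T^[k] (T p)) := by nlinarith
        _ < ρ := by simpa using h
    obtain ⟨w, hw1, hw2⟩ := hpull p w' h0'
    refine ⟨w, ?_, ?_⟩
    · rw [Function.iterate_succ_apply, hw1, hw'1]
    · intro j hj
      rw [Function.iterate_succ_apply]
      match j with
      | 0 =>
        simp only [Function.iterate_zero_apply]
        calc dist w p ≤ lam * dist w' (T p) := hw2
          _ ≤ lam * (lam ^ k * dist q (T^[k] (T p))) := by nlinarith
          _ = lam ^ (k + 1 - 0) * dist q (T^[k] (T p)) := by rw [Nat.sub_zero, pow_succ]; ring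
      | j + 1 =>
        rw [Function.iterate_succ_apply, Function.iterate_succ_apply, hw1]
        have : k + 1 - (j + 1) = k - j := by omega
        rw [this]
        exact hw'2 j (by omega)


lemma holder_sum {A : X → ℝ} {CC θ lam : ℝ} (hC : 0 ≤ CC) (hθ : 0 < θ)
    (hlam0 : 0 < lam) (hlam1 : lam < 1)
    (hA : ∀ x y : X, |A x - A y| ≤ CC * dist x y ^ θ)
    {T : X → X} {w p : X} {k : ℕ} {D : ℝ} (hD : 0 ≤ D)
    (hdist : ∀ j ≤ k, dist (T^[j] w) (T^[j] p) ≤ lam ^ (k - j) * D) :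
    |∑ j ∈ Finset.range k, A (T^[j] w) - ∑ j ∈ Finset.range k, A (T^[j] p)|
      ≤ CC * (lam ^ θ / (1 - lam ^ θ)) * D ^ θ := by
  set μ : ℝ := lam ^ θ with hμ
  have hμ0 : 0 < μ := Real.rpow_pos_of_pos hlam0 θ
  have hμ1 : μ < 1 := Real.rpow_lt_one hlam0.le hlam1 hθ
  rw [← Finset.sum_sub_distrib]
  calc |∑ j ∈ Finset.range k, (A (T^[j] w) - A (T^[j] p))|
      ≤ ∑ j ∈ Finset.range k, |A (T^[j] w) - A (T^[j] p)| := Finset.abs_sum_le_sum_abs _ _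
    _ ≤ ∑ j ∈ Finset.range k, CC * (μ ^ (k - j) * D ^ θ) := by
        apply Finset.sum_le_sum
        intro j hj
        refine (hA _ _).trans ?_
        have h1 : dist (T^[j] w) (T^[j] p) ^ θ ≤ (lam ^ (k - j) * D) ^ θ :=
          Real.rpow_le_rpow dist_nonneg (hdist j (Finset.mem_range.mp hj).le) hθ.le
        have h2 : (lam ^ (k - j) * D) ^ θ = μ ^ (k - j) * D ^ θ := by
          rw [Real.mul_rpow (by positivity) hD, ← Real.rpow_natCast lam (k - j),
            ← Real.rpow_mul hlam0.le, mul_comm (((k : ℕ) - j : ℕ) : ℝ) θ,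
            Real.rpow_mul hlam0.le, Real.rpow_natCast]
        nlinarith [Real.rpow_nonneg (dist_nonneg (x := T^[j] w) (y := T^[j] p)) θ]
    _ = CC * D ^ θ * ∑ j ∈ Finset.range k, μ ^ (k - j) := by
        rw [Finset.mul_sum]; apply Finset.sum_congr rfl; intro j _; ring
    _ ≤ CC * D ^ θ * (μ / (1 - μ)) := by
        have hDθ : 0 ≤ D ^ θ := Real.rpow_nonneg hD θ
        have hsum : ∑ j ∈ Finset.range k, μ ^ (k - j) ≤ μ / (1 - μ) := by
          have hre : ∑ j ∈ Finset.range k, μ ^ (k - j)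
              = μ * ∑ j ∈ Finset.range k, μ ^ j := by
            rw [Finset.mul_sum]
            rw [← Finset.sum_range_reflect (fun j => μ * μ ^ j) k]
            apply Finset.sum_congr rfl
            intro j hj
            have hj' : j < k := Finset.mem_range.mp hj
            rw [← pow_succ']
            congr 1
            omega
          rw [hre]
          have hgeom : ∑ j ∈ Finset.range k, μ ^ j ≤ 1 / (1 - μ) := by
            have h := geom_sum_mul μ k
            have h1μ : 0 < 1 - μ := by linarith
            rw [le_div_iff₀ h1μ]
            have hpow : 0 ≤ μ ^ k := by positivity
            nlinarith
          rw [div_eq_mul_one_div]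
          exact mul_le_mul_of_nonneg_left hgeom hμ0.le
        exact mul_le_mul_of_nonneg_left hsum (mul_nonneg hC hDθ)
    _ = CC * (μ / (1 - μ)) * D ^ θ := by ring


lemma triangle_core [CompactSpace X]
    {T : X → X} (hT : IsExpandingTransitive T)
    {θ : ℝ} (hθ0 : 0 < θ) {A : X → ℝ} (hA : IsThetaHolder θ A) (Abar : ℝ)
    (x y z : X) (b₁ b₂ : ℝ)
    (h1 : peierlsBarrier T A Abar x y < (b₁ : EReal))
    (h2 : peierlsBarrier T A Abar y z < (b₂ : EReal)) :
    peierlsBarrier T A Abar x z ≤ ((b₁ + b₂ : ℝ) : EReal) := by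
  obtain ⟨CC, hC0, hAC⟩ := hA
  obtain ⟨lam, hlam0, hlam1, δ, hδ0, hcontr⟩ := hT.contracting
  obtain ⟨ρ₀, hρ₀, hρprop⟩ := exists_rho hT.cont hT.isOpenMap hδ0
  set ρ := min ρ₀ δ with hρdef
  have hρ : 0 < ρ := lt_min hρ₀ hδ0
  have hpull : ∀ p q : X, dist q (T p) < ρ → ∃ w, T w = q ∧ dist w p ≤ lam * dist q (T p) := by
    intro p q h
    obtain ⟨w, hw, hwd⟩ := hρprop p q (h.trans_le (min_le_left _ _))
    refine ⟨w, hw, ?_⟩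
    have := hcontr w p (le_of_lt hwd)
    rwa [hw] at this
  set K : ℝ := CC * (lam ^ θ / (1 - lam ^ θ)) with hKdef
  have hμ0 : 0 < lam ^ θ := Real.rpow_pos_of_pos hlam0 θ
  have hμ1 : lam ^ θ < 1 := Real.rpow_lt_one hlam0.le hlam1 hθ0
  have hK0 : 0 ≤ K := by
    exact mul_nonneg hC0 (div_nonneg hμ0.le (by linarith))
  rw [peierlsBarrier]
  apply iSup_le
  rintro ⟨ε, hε⟩
  apply ereal_le_coe_of_forall
  intro γ hγ
  -- choose the small scale ε'
  set ε' : ℝ := min (min (ε / 3) (ρ / 3)) ((γ / (K + 1)) ^ (1 / θ) / 2) with hε'def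
  have hgK : 0 < γ / (K + 1) := div_pos hγ (by linarith)
  have hrp : 0 < (γ / (K + 1)) ^ (1 / θ) := Real.rpow_pos_of_pos hgK _
  have hε'0 : 0 < ε' := by
    apply lt_min (lt_min (by linarith) (by linarith))
    linarith
  have hε'ε : 3 * ε' ≤ ε := by
    have := min_le_left (min (ε / 3) (ρ / 3)) ((γ / (K + 1)) ^ (1 / θ) / 2)
    have := min_le_left (ε / 3) (ρ / 3)
    simp only [hε'def]
    have h1' : min (min (ε / 3) (ρ / 3)) ((γ / (K + 1)) ^ (1 / θ) / 2) ≤ ε / 3 :=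
      le_trans (min_le_left _ _) (min_le_left _ _)
    linarith
  have hε'ρ : 2 * ε' < ρ := by
    have h1' : ε' ≤ ρ / 3 := le_trans (min_le_left _ _) (min_le_right _ _)
    linarith
  have hε'γ : K * (2 * ε') ^ θ ≤ γ := by
    have h1' : 2 * ε' ≤ (γ / (K + 1)) ^ (1 / θ) := by
      have := min_le_right (min (ε / 3) (ρ / 3)) ((γ / (K + 1)) ^ (1 / θ) / 2)
      simp only [hε'def]
      linarith [min_le_right (min (ε / 3) (ρ / 3)) ((γ / (K + 1)) ^ (1 / θ) / 2)]
    have h2' : (2 * ε') ^ θ ≤ ((γ / (K + 1)) ^ (1 / θ)) ^ θ :=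
      Real.rpow_le_rpow (by linarith) h1' hθ0.le
    have h3' : ((γ / (K + 1)) ^ (1 / θ)) ^ θ = γ / (K + 1) := by
      rw [← Real.rpow_mul hgK.le, one_div, inv_mul_cancel₀ (ne_of_gt hθ0), Real.rpow_one]
    rw [h3'] at h2'
    have h4' : K * (2 * ε') ^ θ ≤ K * (γ / (K + 1)) := mul_le_mul_of_nonneg_left h2' hK0
    have h5' : K * (γ / (K + 1)) ≤ γ := by
      rw [mul_div_assoc'] at *
      rw [div_le_iff₀ (by linarith : (0:ℝ) < K + 1)]
      nlinarith
    linarith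
  -- extract frequent good times at scale ε'
  have l1 : liminf (fun k => birkhoffInf T A Abar ε' x y k) atTop < (b₁ : EReal) :=
    lt_of_le_of_lt (le_iSup (fun e : {e : ℝ // 0 < e} =>
      liminf (fun k => birkhoffInf T A Abar e.1 x y k) atTop) ⟨ε', hε'0⟩) h1
  have l2 : liminf (fun k => birkhoffInf T A Abar ε' y z k) atTop < (b₂ : EReal) :=
    lt_of_le_of_lt (le_iSup (fun e : {e : ℝ // 0 < e} =>
      liminf (fun k => birkhoffInf T A Abar e.1 y z k) atTop) ⟨ε', hε'0⟩) h2
  have freq1 : ∃ᶠ k in atTop, birkhoffInf T A Abar ε' x y k < (b₁ : EReal) :=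
    frequently_lt_of_liminf_lt (by isBoundedDefault) l1
  obtain ⟨k₂, hk₂⟩ := (frequently_lt_of_liminf_lt (by isBoundedDefault) l2).exists
  rw [birkhoffInf, sInf_lt_iff] at hk₂
  obtain ⟨v, ⟨z₂, hz₂1, hz₂2, rfl⟩, hv₂⟩ := hk₂
  rw [EReal.coe_lt_coe_iff] at hv₂
  -- conclude via frequently
  apply liminf_le_of_frequently_le'
  have step : ∀ k₁ : ℕ, birkhoffInf T A Abar ε' x y k₁ < (b₁ : EReal) →
      birkhoffInf T A Abar ε x z (k₁ + k₂) ≤ ((b₁ + b₂ + γ : ℝ) : EReal) := by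
    intro k₁ hk₁
    rw [birkhoffInf, sInf_lt_iff] at hk₁
    obtain ⟨v, ⟨z₁, hz₁1, hz₁2, rfl⟩, hv₁⟩ := hk₁
    rw [EReal.coe_lt_coe_iff] at hv₁
    set D : ℝ := dist z₂ (T^[k₁] z₁) with hDdef
    have hD2 : D < 2 * ε' := by
      calc D ≤ dist z₂ y + dist y (T^[k₁] z₁) := dist_triangle _ _ _
        _ < ε' + ε' := by
            rw [dist_comm y]
            exact add_lt_add hz₂1 hz₁2
        _ = 2 * ε' := by ring
    have hDρ : D < ρ := by linarith
    obtain ⟨w, hw, hwd⟩ := shadow hlam0.le hlam1.le hpull k₁ z₁ z₂ hDρ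
    -- sums
    have hsum_bound : |∑ j ∈ Finset.range k₁, A (T^[j] w)
        - ∑ j ∈ Finset.range k₁, A (T^[j] z₁)| ≤ γ := by
      have := holder_sum hC0 hθ0 hlam0 hlam1 hAC dist_nonneg hwd
      have hmono : K * D ^ θ ≤ K * (2 * ε') ^ θ :=
        mul_le_mul_of_nonneg_left
          (Real.rpow_le_rpow dist_nonneg hD2.le hθ0.le) hK0
      calc |∑ j ∈ Finset.range k₁, A (T^[j] w) - ∑ j ∈ Finset.range k₁, A (T^[j] z₁)|
          ≤ K * D ^ θ := this
        _ ≤ K * (2 * ε') ^ θ := hmono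
        _ ≤ γ := hε'γ
    have hsplit : ∑ j ∈ Finset.range (k₁ + k₂), (A (T^[j] w) - Abar)
        = ∑ j ∈ Finset.range k₁, (A (T^[j] w) - Abar)
          + ∑ j ∈ Finset.range k₂, (A (T^[j] z₂) - Abar) := by
      rw [Finset.sum_range_add]
      congr 1
      apply Finset.sum_congr rfl
      intro j _
      congr 2
      rw [add_comm k₁ j, Function.iterate_add_apply, hw]
    have hfirst : ∑ j ∈ Finset.range k₁, (A (T^[j] w) - Abar)
        ≤ ∑ j ∈ Finset.range k₁, (A (T^[j] z₁) - Abar) + γ := by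
      have h := (abs_le.mp hsum_bound).2
      rw [Finset.sum_sub_distrib, Finset.sum_sub_distrib]
      rw [← Finset.sum_sub_distrib] at h
      have := Finset.sum_sub_distrib (s := Finset.range k₁)
        (f := fun j => A (T^[j] w)) (g := fun j => A (T^[j] z₁))
      linarith [h]
    -- membership in the ε-ball data
    have hwx : dist w x < ε := by
      have h0 : dist w z₁ ≤ lam ^ (k₁ - 0) * D := by
        simpa using hwd 0 (Nat.zero_le _)
      have hlamk : lam ^ (k₁ - 0) ≤ 1 := pow_le_one₀ hlam0.le hlam1.le
      have hD0 : (0:ℝ) ≤ D := dist_nonneg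
      have : dist w z₁ ≤ D := by nlinarith
      calc dist w x ≤ dist w z₁ + dist z₁ x := dist_triangle _ _ _
        _ < 2 * ε' + ε' := add_lt_add_of_le_of_lt (this.trans hD2.le) hz₁1
        _ = 3 * ε' := by ring
        _ ≤ ε := hε'ε
    have hwz : dist (T^[k₁ + k₂] w) z < ε := by
      have : T^[k₁ + k₂] w = T^[k₂] z₂ := by
        rw [add_comm k₁ k₂, Function.iterate_add_apply, hw]
      rw [this]
      have hε'ltε : ε' ≤ ε := by linarith
      exact lt_of_lt_of_le hz₂2 hε'ltε
    -- conclude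
    rw [birkhoffInf]
    have hmem : ((∑ j ∈ Finset.range (k₁ + k₂), (A (T^[j] w) - Abar) : ℝ) : EReal)
        ∈ {v : EReal | ∃ zz : X, dist zz x < ε ∧ dist (T^[k₁ + k₂] zz) z < ε ∧
          v = ((∑ j ∈ Finset.range (k₁ + k₂), (A (T^[j] zz) - Abar) : ℝ) : EReal)} :=
      ⟨w, hwx, hwz, rfl⟩
    refine le_trans (sInf_le hmem) ?_
    rw [EReal.coe_le_coe_iff, hsplit]
    linarith
  exact (tendsto_add_atTop_nat k₂).frequently (freq1.mono step)

lemma peierls_ne_bot [CompactSpace X]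
    {T : X → X} {A : X → ℝ} {Abar : ℝ} {u : X → ℝ}
    (hu : IsSubaction T A Abar u) (x y : X) :
    peierlsBarrier T A Abar x y ≠ ⊥ := by
  intro h
  have := peierls_lower T A Abar u hu x y
  rw [h, le_bot_iff] at this
  exact EReal.coe_ne_bot _ this

lemma peierls_triangle [CompactSpace X]
    {T : X → X} (hT : IsExpandingTransitive T)
    {θ : ℝ} (hθ0 : 0 < θ) {A : X → ℝ} (hA : IsThetaHolder θ A) {Abar : ℝ}
    {u : X → ℝ} (hu : IsSubaction T A Abar u) (x y z : X) :
    peierlsBarrier T A Abar x z ≤ peierlsBarrier T A Abar x y + peierlsBarrier T A Abar y z := by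
  have hb1 := peierls_ne_bot hu x y
  have hb2 := peierls_ne_bot hu y z
  by_cases ht1 : peierlsBarrier T A Abar x y = ⊤
  · rw [ht1, EReal.top_add_of_ne_bot hb2]; exact le_top
  by_cases ht2 : peierlsBarrier T A Abar y z = ⊤
  · rw [ht2, EReal.add_top_of_ne_bot hb1]; exact le_top
  obtain ⟨a, ha⟩ : ∃ a : ℝ, peierlsBarrier T A Abar x y = (a : EReal) :=
    ⟨_, (EReal.coe_toReal ht1 hb1).symm⟩
  obtain ⟨b, hb⟩ : ∃ b : ℝ, peierlsBarrier T A Abar y z = (b : EReal) :=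
    ⟨_, (EReal.coe_toReal ht2 hb2).symm⟩
  rw [ha, hb, ← EReal.coe_add]
  apply ereal_le_coe_of_forall
  intro γ hγ
  have h1 : peierlsBarrier T A Abar x y < ((a + γ / 2 : ℝ) : EReal) := by
    rw [ha, EReal.coe_lt_coe_iff]; linarith
  have h2 : peierlsBarrier T A Abar y z < ((b + γ / 2 : ℝ) : EReal) := by
    rw [hb, EReal.coe_lt_coe_iff]; linarith
  have := triangle_core hT hθ0 hA Abar x y z _ _ h1 h2
  convert this using 2
  ring

lemma comp_barrier_eq [CompactSpace X] {T : X → X} (hT : IsExpandingTransitive T)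
    {θ : ℝ} (hθ0 : 0 < θ) {A : X → ℝ} (hA : IsThetaHolder θ A) {Abar : ℝ}
    {u : X → ℝ} (hu : IsSubaction T A Abar u) {Cs : Set X}
    (hC : IsIrredComponent T A Abar Cs)
    {x x' : X} (hx : x ∈ Cs) (hx' : x' ∈ Cs) :
    peierlsBarrier T A Abar x x' = ((u x' - u x : ℝ) : EReal) := by
  obtain ⟨x₀, hx₀Ω, rfl⟩ := hC
  have hxsum : peierlsBarrier T A Abar x₀ x + peierlsBarrier T A Abar x x₀ = 0 := hx.2
  have hx'sum : peierlsBarrier T A Abar x₀ x' + peierlsBarrier T A Abar x' x₀ = 0 := hx'.2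
  -- all four barriers are real
  have key : ∀ p q : X, peierlsBarrier T A Abar p q + peierlsBarrier T A Abar q p = 0 →
      ∃ a b : ℝ, peierlsBarrier T A Abar p q = (a : EReal) ∧
        peierlsBarrier T A Abar q p = (b : EReal) ∧ a + b = 0 := by
    intro p q hsum
    have hb1 := peierls_ne_bot hu p q
    have hb2 := peierls_ne_bot hu q p
    have ht1 : peierlsBarrier T A Abar p q ≠ ⊤ := by
      intro h
      rw [h, EReal.top_add_of_ne_bot hb2] at hsum
      exact (by simp : (⊤ : EReal) ≠ 0) hsum
    have ht2 : peierlsBarrier T A Abar q p ≠ ⊤ := by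
      intro h
      rw [h, EReal.add_top_of_ne_bot hb1] at hsum
      exact (by simp : (⊤ : EReal) ≠ 0) hsum
    refine ⟨_, _, (EReal.coe_toReal ht1 hb1).symm, (EReal.coe_toReal ht2 hb2).symm, ?_⟩
    rw [← EReal.coe_toReal ht1 hb1, ← EReal.coe_toReal ht2 hb2, ← EReal.coe_add] at hsum
    exact_mod_cast hsum
  obtain ⟨a1, a2, ha1, ha2, ha⟩ := key x₀ x hxsum
  obtain ⟨b1, b2, hb1, hb2, hb⟩ := key x₀ x' hx'sum
  -- triangle bounds
  have t1 : peierlsBarrier T A Abar x x' ≤ ((a2 + b1 : ℝ) : EReal) := by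
    have := peierls_triangle hT hθ0 hA hu x x₀ x'
    rwa [ha2, hb1, ← EReal.coe_add] at this
  have t2 : peierlsBarrier T A Abar x' x ≤ ((b2 + a1 : ℝ) : EReal) := by
    have := peierls_triangle hT hθ0 hA hu x' x₀ x
    rwa [hb2, ha1, ← EReal.coe_add] at this
  -- lower bounds
  have l1 := peierls_lower T A Abar u hu x x'
  have l2 := peierls_lower T A Abar u hu x' x
  -- the barriers x↔x' are real
  have hbb1 := peierls_ne_bot hu x x'
  have hbb2 := peierls_ne_bot hu x' x
  have htt1 : peierlsBarrier T A Abar x x' ≠ ⊤ :=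
    fun h => EReal.coe_ne_top _ (top_le_iff.mp (h ▸ t1))
  have htt2 : peierlsBarrier T A Abar x' x ≠ ⊤ :=
    fun h => EReal.coe_ne_top _ (top_le_iff.mp (h ▸ t2))
  obtain ⟨c, hc⟩ : ∃ c : ℝ, peierlsBarrier T A Abar x x' = (c : EReal) :=
    ⟨_, (EReal.coe_toReal htt1 hbb1).symm⟩
  obtain ⟨c', hc'⟩ : ∃ c' : ℝ, peierlsBarrier T A Abar x' x = (c' : EReal) :=
    ⟨_, (EReal.coe_toReal htt2 hbb2).symm⟩
  rw [hc] at t1 l1 ⊢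
  rw [hc'] at t2 l2
  rw [EReal.coe_le_coe_iff] at t1 t2 l1 l2
  rw [EReal.coe_eq_coe_iff]
  linarith

lemma ereal_shift (hb : EReal) (c1 c3 c4 c5 : ℝ) (hsum : c1 + c3 + c4 = c5) (a : EReal)
    (h : a ≤ (c1 : EReal) + (hb + (c3 : EReal))) :
    a + (c4 : EReal) ≤ hb + (c5 : EReal) := by
  have heq : (c1 : EReal) + (hb + (c3 : EReal)) + (c4 : EReal) = hb + (c5 : EReal) := by
    rw [← hsum, EReal.coe_add, EReal.coe_add]
    abel
  calc a + (c4 : EReal) ≤ ((c1 : EReal) + (hb + (c3 : EReal))) + (c4 : EReal) :=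
        add_le_add_left h _
    _ = hb + (c5 : EReal) := heq

end Helpers

/-- for a continuous sub-action `u`, the normalized barrier
`(x, y) ↦ h_A(x, y) - u y + u x` is constant on `C i × C j`. -/
theorem normalized_peierls_constant_on_components {X : Type*} [MetricSpace X] [CompactSpace X] [Nonempty X]
    [MeasurableSpace X] [BorelSpace X]
    (T : X → X) (hT : IsExpandingTransitive T)
    (θ : ℝ) (hθ0 : 0 < θ) (hθ1 : θ ≤ 1)
    (A : X → ℝ) (hA : IsThetaHolder θ A)
    (Abar : ℝ) (hAbar : IsErgMinValue T A Abar)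
    (r : ℕ) (hr : 0 < r) (C : Fin r → Set X)
    (hC : ∀ i, IsIrredComponent T A Abar (C i))
    (hdisj : ∀ i j, i ≠ j → Disjoint (C i) (C j))
    (hcover : nonwanderingSet T A Abar = ⋃ i, C i)
    (xp : Fin r → X) (hxp : ∀ i, xp i ∈ C i)
    (u : X → ℝ) (hu : IsSubaction T A Abar u) :
    ∀ i j : Fin r, ∀ x ∈ C i, ∀ x' ∈ C i, ∀ y ∈ C j, ∀ y' ∈ C j,
      peierlsBarrier T A Abar x y + ((u x - u y : ℝ) : EReal) =
        peierlsBarrier T A Abar x' y' + ((u x' - u y' : ℝ) : EReal) := by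
  intro i j x hx x' hx' y hy y' hy'
  have e1 : peierlsBarrier T A Abar x x' = ((u x' - u x : ℝ) : EReal) :=
    comp_barrier_eq hT hθ0 hA hu (hC i) hx hx'
  have e1' : peierlsBarrier T A Abar x' x = ((u x - u x' : ℝ) : EReal) :=
    comp_barrier_eq hT hθ0 hA hu (hC i) hx' hx
  have e3 : peierlsBarrier T A Abar y' y = ((u y - u y' : ℝ) : EReal) :=
    comp_barrier_eq hT hθ0 hA hu (hC j) hy' hy
  have e3' : peierlsBarrier T A Abar y y' = ((u y' - u y : ℝ) : EReal) :=
    comp_barrier_eq hT hθ0 hA hu (hC j) hy hy'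
  have key : ∀ p p' q q' : X,
      peierlsBarrier T A Abar p p' = ((u p' - u p : ℝ) : EReal) →
      peierlsBarrier T A Abar q' q = ((u q - u q' : ℝ) : EReal) →
      peierlsBarrier T A Abar p q + ((u p - u q : ℝ) : EReal) ≤
        peierlsBarrier T A Abar p' q' + ((u p' - u q' : ℝ) : EReal) := by
    intro p p' q q' ep eq'
    have tri1 := peierls_triangle hT hθ0 hA hu p p' q
    have tri2 := peierls_triangle hT hθ0 hA hu p' q' q
    have chain : peierlsBarrier T A Abar p q ≤
        ((u p' - u p : ℝ) : EReal) +
          (peierlsBarrier T A Abar p' q' + ((u q - u q' : ℝ) : EReal)) := by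
      calc peierlsBarrier T A Abar p q
          ≤ peierlsBarrier T A Abar p p' + peierlsBarrier T A Abar p' q := tri1
        _ ≤ peierlsBarrier T A Abar p p' +
            (peierlsBarrier T A Abar p' q' + peierlsBarrier T A Abar q' q) :=
          add_le_add_right tri2 _
        _ = ((u p' - u p : ℝ) : EReal) +
            (peierlsBarrier T A Abar p' q' + ((u q - u q' : ℝ) : EReal)) := by rw [ep, eq']
    exact ereal_shift _ _ _ _ _ (by ring) _ chain
  exact le_antisymm (key x x' y y' e1 e3) (key x' x y' y e1' e3')
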